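/- Let λ : [0,∞) → ℝ be continuous and nonnegative, y solve y'' = λ·y with y(0)=1, y'(0)=h ≥ 0, and J : [0,T) → ℝ positive C² with J'' ≤ λ·J, J(0)=1, J'(0) ≤ h. Then the function t ↦ J(t)/y(t) is nonincreasing on [0,T). -/

import Mathlib

lemma ypos_aux (l y y' : ℝ → ℝ) (h : ℝ)
    (hlnn : ∀ t ≥ (0:ℝ), 0 ≤ l t)
    (hh : 0 ≤ h)
    (hy : ∀ t ≥ (0:ℝ), HasDerivAt y (y' t) t)
    (hy' : ∀ t ≥ (0:ℝ), HasDerivAt y' (l t * y t) t)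
    (hy'c : ContinuousOn y' (Set.Ici 0))
    (hy0 : y 0 = 1) (hy'0 : y' 0 = h) :
    ∀ t ≥ (0:ℝ), 0 < y t := by
  intro t ht
  by_contra hc
  push_neg at hc
  set Z : Set ℝ := {s : ℝ | 0 ≤ s ∧ y s ≤ 0} with hZ
  have hZne : Z.Nonempty := ⟨t, ht, hc⟩
  have hbdd : BddBelow Z := ⟨0, fun s hs => hs.1⟩
  set t0 := sInf Z with ht0def
  have ht0 : 0 ≤ t0 := le_csInf hZne (fun s hs => hs.1)
  have hmem : t0 ∈ closure Z := csInf_mem_closure hZne hbdd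
  haveI hne : (nhdsWithin t0 Z).NeBot := mem_closure_iff_nhdsWithin_neBot.mp hmem
  have hten : Filter.Tendsto y (nhdsWithin t0 Z) (nhds (y t0)) :=
    ((hy t0 ht0).continuousAt).continuousWithinAt
  have hyt0 : y t0 ≤ 0 := by
    refine le_of_tendsto hten ?_
    filter_upwards [self_mem_nhdsWithin] with s hs using hs.2
  have ht0pos : 0 < t0 := by
    rcases ht0.lt_or_eq with h1 | h1
    · exact h1
    · exfalso; rw [← h1, hy0] at hyt0; linarith
  have hbelow : ∀ s, 0 ≤ s → s < t0 → 0 < y s := by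
    intro s hs hst
    by_contra hcs
    push_neg at hcs
    exact absurd (csInf_le hbdd ⟨hs, hcs⟩) (not_le.mpr hst)
  have hsub : Set.Icc (0:ℝ) t0 ⊆ Set.Ici 0 := fun s hs => hs.1
  have hm1 : MonotoneOn y' (Set.Icc 0 t0) := by
    apply monotoneOn_of_deriv_nonneg (convex_Icc 0 t0) (hy'c.mono hsub)
    · intro s hs
      rw [interior_Icc] at hs
      exact (hy' s hs.1.le).differentiableAt.differentiableWithinAt
    · intro s hs
      rw [interior_Icc] at hs
      rw [(hy' s hs.1.le).deriv]
      exact mul_nonneg (hlnn s hs.1.le) (hbelow s hs.1.le hs.2).le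
  have hy'nn : ∀ s ∈ Set.Icc (0:ℝ) t0, 0 ≤ y' s := by
    intro s hs
    have := hm1 (Set.left_mem_Icc.mpr ht0) hs hs.1
    rw [hy'0] at this; linarith
  have hm2 : MonotoneOn y (Set.Icc 0 t0) := by
    apply monotoneOn_of_deriv_nonneg (convex_Icc 0 t0)
    · exact fun s hs => (hy s hs.1).continuousAt.continuousWithinAt
    · intro s hs
      rw [interior_Icc] at hs
      exact (hy s hs.1.le).differentiableAt.differentiableWithinAt
    · intro s hs
      rw [interior_Icc] at hs
      rw [(hy s hs.1.le).deriv]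
      exact hy'nn s ⟨hs.1.le, hs.2.le⟩
  have : (1:ℝ) ≤ y t0 := by
    have := hm2 (Set.left_mem_Icc.mpr ht0) (Set.right_mem_Icc.mpr ht0) ht0
    rwa [hy0] at this
  linarith

/-- Under the comparison-lemma setup, the quotient `t ↦ J t / y t` is
nonincreasing on `[0,T)`. -/
theorem stmt_4 (l y y' J J' J'' : ℝ → ℝ) (h : ℝ) (T : EReal)
    (hl : ContinuousOn l (Set.Ici 0))
    (hlnn : ∀ t ≥ (0:ℝ), 0 ≤ l t)
    (hh : 0 ≤ h)
    (hy : ∀ t ≥ (0:ℝ), HasDerivAt y (y' t) t)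
    (hy' : ∀ t ≥ (0:ℝ), HasDerivAt y' (l t * y t) t)
    (hy'c : ContinuousOn y' (Set.Ici 0))
    (hy0 : y 0 = 1) (hy'0 : y' 0 = h)
    (hT : 0 < T)
    (hJpos : ∀ t : ℝ, 0 ≤ t → (t : EReal) < T → 0 < J t)
    (hJ : ∀ t : ℝ, 0 ≤ t → (t : EReal) < T → HasDerivAt J (J' t) t)
    (hJ' : ∀ t : ℝ, 0 ≤ t → (t : EReal) < T → HasDerivAt J' (J'' t) t)
    (hJ''c : ContinuousOn J'' {t : ℝ | 0 ≤ t ∧ (t : EReal) < T})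
    (hJineq : ∀ t : ℝ, 0 ≤ t → (t : EReal) < T → J'' t ≤ l t * J t)
    (hJ0 : J 0 = 1) (hJ'0 : J' 0 ≤ h) :
    AntitoneOn (fun t => J t / y t) {t : ℝ | 0 ≤ t ∧ (t : EReal) < T} := by
  have hypos : ∀ t ≥ (0:ℝ), 0 < y t :=
    ypos_aux l y y' h hlnn hh hy hy' hy'c hy0 hy'0
  set S : Set ℝ := {t : ℝ | 0 ≤ t ∧ (t : EReal) < T} with hSdef
  have hSsub : S ⊆ Set.Ici 0 := fun s hs => hs.1
  have h0S : (0:ℝ) ∈ S := ⟨le_refl 0, by exact_mod_cast hT⟩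
  -- convexity of S
  have hconv : Convex ℝ S := by
    rw [convex_iff_ordConnected]
    constructor
    intro x hx z hz s hs
    exact ⟨le_trans hx.1 hs.1, lt_of_le_of_lt (EReal.coe_le_coe_iff.mpr hs.2) hz.2⟩
  -- interior of S
  have hU : IsOpen {t : ℝ | (t : EReal) < T} :=
    isOpen_Iio.preimage continuous_coe_real_ereal
  have hSint : interior S = Set.Ioi 0 ∩ {t : ℝ | (t : EReal) < T} := by
    have : S = Set.Ici 0 ∩ {t : ℝ | (t : EReal) < T} := rfl
    rw [this, interior_inter, interior_Ici, hU.interior_eq]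
  have hintS : ∀ s ∈ interior S, 0 < s ∧ (s : EReal) < T := by
    intro s hs; rw [hSint] at hs; exact ⟨hs.1, hs.2⟩
  -- the Wronskian
  set W : ℝ → ℝ := fun t => J' t * y t - J t * y' t with hWdef
  have hWderiv : ∀ t ∈ S, HasDerivAt W ((J'' t - l t * J t) * y t) t := by
    intro t ht
    have h1 := ((hJ' t ht.1 ht.2).mul (hy t ht.1)).sub
      ((hJ t ht.1 ht.2).mul (hy' t ht.1))
    exact h1.congr_deriv (by ring)
  have hWcont : ContinuousOn W S := by
    intro t ht
    exact (((hJ' t ht.1 ht.2).continuousAt.continuousWithinAt.mul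
      (hy t ht.1).continuousAt.continuousWithinAt).sub
      ((hJ t ht.1 ht.2).continuousAt.continuousWithinAt.mul
        ((hy'c t ht.1).mono hSsub)))
  have hWanti : AntitoneOn W S := by
    apply antitoneOn_of_deriv_nonpos hconv hWcont
    · intro s hs
      have hsS : s ∈ S := interior_subset hs
      exact (hWderiv s hsS).differentiableAt.differentiableWithinAt
    · intro s hs
      have hsS : s ∈ S := interior_subset hs
      rw [(hWderiv s hsS).deriv]
      have h1 := hJineq s hsS.1 hsS.2
      have h2 := (hypos s hsS.1).le
      nlinarith
  have hW0 : W 0 ≤ 0 := by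
    simp only [hWdef, hy0, hJ0, hy'0]
    linarith
  have hWle : ∀ t ∈ S, W t ≤ 0 := fun t ht =>
    le_trans (hWanti h0S ht ht.1) hW0
  -- the quotient
  have hfd : ∀ t ∈ S, HasDerivAt (fun t => J t / y t)
      ((J' t * y t - J t * y' t) / (y t)^2) t := by
    intro t ht
    exact (hJ t ht.1 ht.2).div (hy t ht.1) (hypos t ht.1).ne'
  apply antitoneOn_of_deriv_nonpos hconv
  · intro t ht
    exact (hfd t ht).continuousAt.continuousWithinAt
  · intro s hs
    exact (hfd s (interior_subset hs)).differentiableAt.differentiableWithinAt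
  · intro s hs
    have hsS : s ∈ S := interior_subset hs
    rw [(hfd s hsS).deriv]
    apply div_nonpos_of_nonpos_of_nonneg (hWle s hsS) (sq_nonneg _)
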